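/- arXiv:2504.10966 — 6 statements merged into one kernel-verified Lean document; each statement's English description precedes it below -/
import Mathlib

section
/- Let f : [0,∞) → ℝ be C¹ with f(s) > 0 for all s > 0, and suppose F(s) := ∫_s^∞ dτ/f(τ) is finite for every s > 0. If there exists s₁ > 0 such that f'(s)·F(s) ≤ 1 for all s ≥ s₁, then there exists a constant C > 0 such that f(F⁻¹(t)) ≤ C·t⁻¹ for all t ∈ (0, F(s₁)). -/
open Set MeasureTheory

/-- If `f` is `C¹` on `[0,∞)`, positive on `(0,∞)`, with
`F s = ∫_s^∞ dτ / f τ` finite, and `f'(s) F(s) ≤ 1` for `s ≥ s₁`, then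
`f (F⁻¹ t) ≤ C / t` on `(0, F s₁)`. -/
theorem stmt0
    (f : ℝ → ℝ) (hf : ContDiffOn ℝ 1 f (Ici 0))
    (hfpos : ∀ s > (0:ℝ), 0 < f s)
    (hint : ∀ s > (0:ℝ), IntegrableOn (fun τ => 1 / f τ) (Ioi s))
    (F : ℝ → ℝ) (hF : ∀ s > (0:ℝ), F s = ∫ τ in Ioi s, 1 / f τ)
    (Finv : ℝ → ℝ)
    (hFinv_left : ∀ s > (0:ℝ), Finv (F s) = s)
    (s₁ : ℝ) (hs₁ : 0 < s₁)
    (hFinv_right : ∀ t ∈ Ioo 0 (F s₁), s₁ < Finv t ∧ F (Finv t) = t)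
    (hfF : ∀ s ≥ s₁, deriv f s * F s ≤ 1) :
    ∃ C > (0:ℝ), ∀ t ∈ Ioo 0 (F s₁), f (Finv t) ≤ C / t := by
  have hfc : ContinuousOn f (Ici 0) := hf.continuousOn
  have hinvc : ContinuousOn (fun τ => 1 / f τ) (Ioi 0) := by
    apply ContinuousOn.div continuousOn_const (hfc.mono Ioi_subset_Ici_self)
    exact fun x hx => ne_of_gt (hfpos x hx)
  -- F s = F s₁ - ∫_{s₁}^s 1/f for s > 0
  have key : ∀ a b : ℝ, 0 < a → a ≤ b → F a = (∫ τ in a..b, 1 / f τ) + F b := by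
    intro a b ha hab
    have hb : 0 < b := lt_of_lt_of_le ha hab
    rw [hF a ha, hF b hb, intervalIntegral.integral_of_le hab]
    rw [← MeasureTheory.setIntegral_union (Ioc_disjoint_Ioi le_rfl) measurableSet_Ioi
      ((hint a ha).mono_set Ioc_subset_Ioi_self) (hint b hb)]
    rw [Ioc_union_Ioi_eq_Ioi hab]
  have hFeq : ∀ s > (0:ℝ), F s = F s₁ - ∫ τ in s₁..s, 1 / f τ := by
    intro s hs
    rcases le_total s s₁ with h | h
    · have := key s s₁ hs h
      rw [intervalIntegral.integral_symm] at this
      linarith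
    · have := key s₁ s hs₁ h
      linarith
  have hFd : ∀ s > (0:ℝ), HasDerivAt F (-(1 / f s)) s := by
    intro s hs
    have hci : IntervalIntegrable (fun τ => 1 / f τ) volume s₁ s := by
      rw [intervalIntegrable_iff]
      apply (hint (min s₁ s / 2) (by positivity)).mono_set
      intro x hx
      have := hx.1
      simp only [mem_Ioi]
      calc min s₁ s / 2 < min s₁ s := by
            have : 0 < min s₁ s := lt_min hs₁ hs
            linarith
        _ < x := hx.1
    have hmeas : StronglyMeasurableAtFilter (fun τ => 1 / f τ) (nhds s) :=
      hinvc.stronglyMeasurableAtFilter isOpen_Ioi _ hs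
    have hcont : ContinuousAt (fun τ => 1 / f τ) s :=
      hinvc.continuousAt (Ioi_mem_nhds hs)
    have h1 : HasDerivAt (fun u => ∫ τ in s₁..u, 1 / f τ) (1 / f s) s :=
      intervalIntegral.integral_hasDerivAt_right hci hmeas hcont
    have h2 : HasDerivAt (fun u => F s₁ - ∫ τ in s₁..u, 1 / f τ) (-(1 / f s)) s := by
      simpa using h1.const_sub (F s₁)
    apply h2.congr_of_eventuallyEq
    filter_upwards [Ioi_mem_nhds hs] with u hu
    exact hFeq u hu
  have hfd : ∀ s > (0:ℝ), HasDerivAt f (deriv f s) s := by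
    intro s hs
    have hmem : Ici (0:ℝ) ∈ nhds s := Filter.mem_of_superset (Ioi_mem_nhds hs) Ioi_subset_Ici_self
    exact ((hf.contDiffAt hmem).differentiableAt one_ne_zero).hasDerivAt
  have hgd : ∀ s > (0:ℝ), HasDerivAt (fun u => f u * F u) (deriv f s * F s - 1) s := by
    intro s hs
    have h := (hfd s hs).mul (hFd s hs)
    have : deriv f s * F s - 1 = deriv f s * F s + f s * -(1 / f s) := by
      have hne : f s ≠ 0 := ne_of_gt (hfpos s hs)
      field_simp
      ring
    rw [this]
    exact h
  have hanti : AntitoneOn (fun u => f u * F u) (Ici s₁) := by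
    apply antitoneOn_of_deriv_nonpos (convex_Ici s₁)
    · intro s hs
      exact (hgd s (lt_of_lt_of_le hs₁ hs)).continuousAt.continuousWithinAt
    · intro s hs
      rw [interior_Ici] at hs
      exact ((hgd s (hs₁.trans hs)).differentiableAt).differentiableWithinAt
    · intro s hs
      rw [interior_Ici] at hs
      rw [(hgd s (hs₁.trans hs)).deriv]
      have := hfF s (le_of_lt hs)
      linarith
  refine ⟨max (f s₁ * F s₁) 1, lt_of_lt_of_le one_pos (le_max_right _ _), ?_⟩
  intro t ht
  obtain ⟨hst, hFt⟩ := hFinv_right t ht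
  have h1 : f (Finv t) * F (Finv t) ≤ f s₁ * F s₁ :=
    hanti self_mem_Ici (le_of_lt hst) (le_of_lt hst)
  rw [hFt] at h1
  have ht0 : 0 < t := ht.1
  rw [le_div_iff₀ ht0]
  calc f (Finv t) * t ≤ f s₁ * F s₁ := h1
    _ ≤ max (f s₁ * F s₁) 1 := le_max_left _ _
end

section
/- For q > 1, let q' = q/(q−1). The radial function v(x) = (−2 log|x|)^{1/q} satisfies −Δv = (4/(q q')) · v^{1−2q} · e^{v^q} pointwise on the punctured disc {x ∈ ℝ² : 0 < |x| < 1}. -/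
open Set Real

/-- For `q > 1` and `q' = q/(q-1)`, the radial profile
`φ r = (-2 log r)^(1/q)` of `v(x) = (-2 log |x|)^(1/q)` satisfies
`-Δ v = (4/(q q')) v^(1-2q) e^(v^q)` on the punctured unit disc, where for a
radial function the Laplacian on `ℝ²` is `Δ v = φ'' (r) + φ'(r)/r`, `r = |x|`. -/
theorem stmt1 (q : ℝ) (hq : 1 < q) (q' : ℝ) (hq' : q' = q / (q - 1))
    (φ : ℝ → ℝ) (hφ : ∀ r ∈ Ioo (0:ℝ) 1, φ r = (-2 * Real.log r) ^ (1/q : ℝ)) :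
    ∀ r ∈ Ioo (0:ℝ) 1,
      -(deriv (deriv φ) r + deriv φ r / r)
        = (4 / (q * q')) * (φ r) ^ ((1 : ℝ) - 2 * q) * Real.exp ((φ r) ^ (q : ℝ)) := by
  have hq0 : q ≠ 0 := by linarith
  have hq1 : q - 1 ≠ 0 := by linarith
  set g1 : ℝ → ℝ := fun s => (1/q) * (-2 * Real.log s) ^ (1/q - 1 : ℝ) * (-2/s) with hg1
  have hLpos : ∀ s ∈ Ioo (0:ℝ) 1, 0 < -2 * Real.log s := by
    intro s hs
    have := Real.log_neg hs.1 hs.2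
    nlinarith
  have hderiv : ∀ s ∈ Ioo (0:ℝ) 1,
      HasDerivAt (fun t => (-2 * Real.log t) ^ (1/q : ℝ)) (g1 s) s := by
    intro s hs
    have hL := hLpos s hs
    have h1 : HasDerivAt (fun t : ℝ => -2 * Real.log t) (-2 / s) s := by
      have := (Real.hasDerivAt_log hs.1.ne').const_mul (-2 : ℝ)
      simpa [div_eq_mul_inv] using this
    have h2 := (Real.hasDerivAt_rpow_const (p := (1/q : ℝ)) (Or.inl hL.ne')).comp s h1
    simpa [hg1, Function.comp_def, mul_comm, mul_assoc, mul_left_comm] using h2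
  have hdφ : ∀ s ∈ Ioo (0:ℝ) 1, deriv φ s = g1 s := by
    intro s hs
    have hev : φ =ᶠ[nhds s] fun t => (-2 * Real.log t) ^ (1/q : ℝ) := by
      filter_upwards [isOpen_Ioo.mem_nhds hs] with t ht using hφ t ht
    rw [hev.deriv_eq, (hderiv s hs).deriv]
  intro r hr
  have hL := hLpos r hr
  have hr0 : (0:ℝ) < r := hr.1
  set D : ℝ := (1/q) * (((1/q - 1) * (-2 * Real.log r) ^ (1/q - 2 : ℝ) * (-2/r)) * (-2/r)
      + (-2 * Real.log r) ^ (1/q - 1 : ℝ) * (-2 * (-1/r^2))) with hD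
  have hderiv2 : HasDerivAt g1 D r := by
    have h1 : HasDerivAt (fun t : ℝ => -2 * Real.log t) (-2 / r) r := by
      have := (Real.hasDerivAt_log hr0.ne').const_mul (-2 : ℝ)
      simpa [div_eq_mul_inv] using this
    have h2 : HasDerivAt (fun t : ℝ => (-2 * Real.log t) ^ (1/q - 1 : ℝ))
        ((1/q - 1) * (-2 * Real.log r) ^ (1/q - 2 : ℝ) * (-2/r)) r := by
      have h := (Real.hasDerivAt_rpow_const (p := (1/q - 1 : ℝ)) (Or.inl hL.ne')).comp r h1
      rw [show ((1/q - 1 : ℝ) - 1) = (1/q - 2 : ℝ) by ring] at h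
      simpa [Function.comp_def, mul_comm, mul_assoc, mul_left_comm] using h
    have h3 : HasDerivAt (fun t : ℝ => -2 / t) (-2 * (-1 / r^2)) r := by
      have := (hasDerivAt_inv hr0.ne').const_mul (-2 : ℝ)
      simpa [div_eq_mul_inv, neg_div] using this
    have h4 := (h2.mul h3).const_mul (1/q : ℝ)
    simpa [hg1, hD, mul_comm, mul_assoc, mul_left_comm] using h4
  have hd2 : deriv (deriv φ) r = D := by
    have hev : deriv φ =ᶠ[nhds r] g1 := by
      filter_upwards [isOpen_Ioo.mem_nhds hr] with t ht using hdφ t ht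
    rw [hev.deriv_eq, hderiv2.deriv]
  rw [hd2, hdφ r hr, hφ r hr]
  have hexp : Real.exp ((((-2) * Real.log r) ^ (1/q : ℝ)) ^ (q:ℝ)) = 1 / r^2 := by
    rw [← Real.rpow_natCast r 2, ← Real.rpow_mul hL.le, one_div_mul_cancel hq0,
      Real.rpow_one, Real.rpow_def_of_pos hr0]
    rw [one_div, ← Real.exp_neg]
    ring_nf
  have hpow : (((-2) * Real.log r) ^ (1/q : ℝ)) ^ ((1:ℝ) - 2*q)
      = ((-2) * Real.log r) ^ (1/q - 2 : ℝ) := by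
    rw [← Real.rpow_mul hL.le]
    congr 1
    field_simp
  have hadd : ((-2) * Real.log r) ^ (1/q - 1 : ℝ)
      = ((-2) * Real.log r) ^ (1/q - 2 : ℝ) * ((-2) * Real.log r) := by
    rw [show (1/q - 1 : ℝ) = (1/q - 2) + 1 by ring, Real.rpow_add hL, Real.rpow_one]
  rw [hpow, hexp, hg1, hD]
  simp only [hadd]
  rw [hq']
  have hr0' : r ≠ 0 := hr0.ne'
  field_simp
  ring
end

section
/- The function u(x) = (−2 log|x|)^{1/2} satisfies −Δu = u^{−3}·e^{u²} pointwise on the punctured disc {x ∈ ℝ² : 0 < |x| < 1}. -/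
open Set Real

/-- The radial profile `φ r = (-2 log r)^(1/2)` of
`u(x) = (-2 log |x|)^(1/2)` satisfies `-Δ u = u^(-3) e^(u²)` on the punctured
unit disc, with the radial Laplacian `Δ u = φ''(r) + φ'(r)/r`, `r = |x|`. -/
theorem stmt3 (φ : ℝ → ℝ)
    (hφ : ∀ r ∈ Ioo (0:ℝ) 1, φ r = (-2 * Real.log r) ^ (1/2 : ℝ)) :
    ∀ r ∈ Ioo (0:ℝ) 1,
      -(deriv (deriv φ) r + deriv φ r / r)
        = (φ r) ^ (-(3:ℝ)) * Real.exp ((φ r) ^ 2) := by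
  have hL : ∀ s ∈ Ioo (0:ℝ) 1, 0 < -2 * Real.log s := by
    intro s hs
    have := Real.log_neg hs.1 hs.2
    linarith
  have hfe : ∀ s ∈ Ioo (0:ℝ) 1, φ s = Real.sqrt (-2 * Real.log s) := by
    intro s hs
    rw [hφ s hs, Real.sqrt_eq_rpow]
  -- derivative of the inner function
  have hinner : ∀ s ∈ Ioo (0:ℝ) 1,
      HasDerivAt (fun x => -2 * Real.log x) (-2 / s) s := by
    intro s hs
    have h := (Real.hasDerivAt_log (ne_of_gt hs.1)).const_mul (-2 : ℝ)
    rw [div_eq_mul_inv]; exact h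
  -- derivative of f = sqrt (-2 log ·)
  have hder : ∀ s ∈ Ioo (0:ℝ) 1,
      HasDerivAt (fun x => Real.sqrt (-2 * Real.log x))
        ((-2 / s) / (2 * Real.sqrt (-2 * Real.log s))) s := by
    intro s hs
    exact (hinner s hs).sqrt (ne_of_gt (hL s hs))
  have hφder : ∀ s ∈ Ioo (0:ℝ) 1,
      deriv φ s = (-2 / s) / (2 * Real.sqrt (-2 * Real.log s)) := by
    intro s hs
    have hev : φ =ᶠ[nhds s] (fun x => Real.sqrt (-2 * Real.log x)) :=
      Filter.eventually_of_mem (isOpen_Ioo.mem_nhds hs) hfe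
    rw [hev.deriv_eq]
    exact (hder s hs).deriv
  intro r hr
  obtain ⟨hr0, hr1⟩ := hr
  have hrm : r ∈ Ioo (0:ℝ) 1 := ⟨hr0, hr1⟩
  set L : ℝ := -2 * Real.log r with hLdef
  have hLpos : 0 < L := hL r hrm
  set s : ℝ := Real.sqrt L with hsdef
  have hspos : 0 < s := Real.sqrt_pos.mpr hLpos
  have hs2 : s ^ 2 = L := Real.sq_sqrt hLpos.le
  -- second derivative
  have hu : HasDerivAt (fun x : ℝ => -2 / x) (2 / r ^ 2) r := by
    have h := (hasDerivAt_inv (ne_of_gt hr0)).const_mul (-2 : ℝ)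
    have : (fun x : ℝ => -2 * x⁻¹) = fun x : ℝ => -2 / x := by
      funext x; ring
    rw [this] at h
    rw [show (2:ℝ) / r ^ 2 = -2 * -(r ^ 2)⁻¹ by ring]
    exact h
  have hv : HasDerivAt (fun x : ℝ => 2 * Real.sqrt (-2 * Real.log x))
      (2 * ((-2 / r) / (2 * Real.sqrt (-2 * Real.log r)))) r :=
    (hder r hrm).const_mul 2
  have hvne : 2 * Real.sqrt (-2 * Real.log r) ≠ 0 := by
    have : (0:ℝ) < 2 * s := by positivity
    simpa [hsdef, hLdef] using ne_of_gt this
  have hdd : HasDerivAt (fun x : ℝ => (-2 / x) / (2 * Real.sqrt (-2 * Real.log x)))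
      ((2 / r ^ 2 * (2 * Real.sqrt (-2 * Real.log r)) -
        (-2 / r) * (2 * ((-2 / r) / (2 * Real.sqrt (-2 * Real.log r))))) /
        (2 * Real.sqrt (-2 * Real.log r)) ^ 2) r := hu.div hv hvne
  have hev2 : deriv φ =ᶠ[nhds r]
      (fun x => (-2 / x) / (2 * Real.sqrt (-2 * Real.log x))) :=
    Filter.eventually_of_mem (isOpen_Ioo.mem_nhds hrm) hφder
  have hd2 : deriv (deriv φ) r =
      (2 / r ^ 2 * (2 * s) - (-2 / r) * (2 * ((-2 / r) / (2 * s)))) / (2 * s) ^ 2 := by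
    rw [hev2.deriv_eq, hdd.deriv]
  have hd1 : deriv φ r = (-2 / r) / (2 * s) := hφder r hrm
  -- rewrite RHS
  have hφr : φ r = s := hfe r hrm
  have hexp : Real.exp (φ r ^ 2) = (r ^ 2)⁻¹ := by
    rw [hφr, hs2, hLdef]
    rw [show -2 * Real.log r = Real.log ((r ^ 2)⁻¹) by
      rw [Real.log_inv, Real.log_pow]; push_cast; ring]
    exact Real.exp_log (by positivity)
  have hpow : (φ r) ^ (-(3:ℝ)) = (s ^ 3)⁻¹ := by
    rw [hφr, Real.rpow_neg hspos.le, show (3:ℝ) = ((3:ℕ):ℝ) by norm_num,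
      Real.rpow_natCast]
  rw [hd2, hd1, hpow, hexp]
  have hrne : r ≠ 0 := ne_of_gt hr0
  have hsne : s ≠ 0 := ne_of_gt hspos
  field_simp
  ring
end

section
/- Let f be C¹ on [0,∞) with f(s) > 0, f'(s) > 0 for s > 0, F(s) = ∫_s^∞ dτ/f(τ) < ∞, and suppose β > 0 satisfies f'(s)F(s) ≤ 1 for all s ≥ β. Then the function φ(t) := F⁻¹(t⁻²) is concave on the interval (F(β)^{−1/2}, ∞). -/
open Set MeasureTheory

private lemma concaveOn_congr' {s : Set ℝ} {f g : ℝ → ℝ} (h : ConcaveOn ℝ s f)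
    (hfg : ∀ x ∈ s, f x = g x) : ConcaveOn ℝ s g := by
  refine ⟨h.1, fun x hx y hy a b ha hb hab => ?_⟩
  rw [← hfg x hx, ← hfg y hy, ← hfg _ (h.1 hx hy ha hb hab)]
  exact h.2 hx hy ha hb hab

/-- With `f, F` as before and `β > 0` such that `f'(s) F(s) ≤ 1`
for all `s ≥ β`, the function `φ(t) = F⁻¹(t⁻²)` is concave on `(F(β)^(-1/2), ∞)`. -/
theorem stmt7
    (f : ℝ → ℝ) (hf : ContDiffOn ℝ 1 f (Ici 0))
    (hfpos : ∀ s > (0:ℝ), 0 < f s) (hf'pos : ∀ s > (0:ℝ), 0 < deriv f s)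
    (hint : ∀ s > (0:ℝ), IntegrableOn (fun τ => 1 / f τ) (Ioi s))
    (F : ℝ → ℝ) (hF : ∀ s > (0:ℝ), F s = ∫ τ in Ioi s, 1 / f τ)
    (β : ℝ) (hβ : 0 < β) (hfF : ∀ s ≥ β, deriv f s * F s ≤ 1)
    (Finv : ℝ → ℝ)
    (hFinv_left : ∀ s > (0:ℝ), Finv (F s) = s)
    (hFinv_right : ∀ u : ℝ, 0 < u → u ≤ F β → β ≤ Finv u ∧ F (Finv u) = u) :
    ConcaveOn ℝ (Ioi ((F β) ^ (-(1/2) : ℝ))) (fun t => Finv (t ^ (-(2:ℝ)))) := by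
  -- continuity of 1/f
  have hfc : ∀ s > (0:ℝ), ContinuousAt f s := fun s hs =>
    hf.continuousOn.continuousAt (Ici_mem_nhds hs)
  have h1fc : ∀ s > (0:ℝ), ContinuousAt (fun τ => 1 / f τ) s := fun s hs =>
    continuousAt_const.div (hfc s hs) (hfpos s hs).ne'
  have h1f : ContinuousOn (fun τ => 1 / f τ) (Ioi 0) :=
    fun x hx => (h1fc x hx).continuousWithinAt
  -- derivative of F
  have hFd : ∀ s, 0 < s → HasDerivAt F (-(1 / f s)) s := by
    intro s hs
    set c := s / 2 with hc
    have hc0 : 0 < c := by positivity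
    have hcs : c < s := by simp only [hc]; linarith
    have hkey : ∀ x ∈ Ioi c, F x = F c - ∫ τ in c..x, 1 / f τ := by
      intro x hx
      rw [hF x (hc0.trans hx), hF c hc0, intervalIntegral.integral_of_le (le_of_lt hx)]
      have hi1 : IntegrableOn (fun τ => 1 / f τ) (Ioc c x) :=
        (hint c hc0).mono_set Ioc_subset_Ioi_self
      have hi2 : IntegrableOn (fun τ => 1 / f τ) (Ioi x) :=
        (hint c hc0).mono_set (Ioi_subset_Ioi (le_of_lt hx))
      have hsplit := setIntegral_union (Ioc_disjoint_Ioi le_rfl) measurableSet_Ioi hi1 hi2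
      rw [Ioc_union_Ioi_eq_Ioi (le_of_lt hx)] at hsplit
      rw [hsplit]; ring
    have hii : IntervalIntegrable (fun τ => 1 / f τ) volume c s := by
      rw [intervalIntegrable_iff_integrableOn_Ioc_of_le (le_of_lt hcs)]
      exact (hint c hc0).mono_set Ioc_subset_Ioi_self
    have hmeas : StronglyMeasurableAtFilter (fun τ => 1 / f τ) (nhds s) volume :=
      h1f.stronglyMeasurableAtFilter isOpen_Ioi s hs
    have h0 := intervalIntegral.integral_hasDerivAt_right hii hmeas (h1fc s hs)
    have hderiv : HasDerivAt (fun x => F c - ∫ τ in c..x, 1 / f τ) (-(1 / f s)) s := by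
      exact ((hasDerivAt_const s (F c)).sub h0).congr_deriv (by simp)
    exact hderiv.congr_of_eventuallyEq
      (Filter.eventuallyEq_of_mem (Ioi_mem_nhds hcs) hkey)
  -- continuity and strict antitonicity of F
  have hFc : ContinuousOn F (Ioi 0) := fun x hx => (hFd x hx).continuousAt.continuousWithinAt
  have hFanti : StrictAntiOn F (Ioi 0) := by
    apply strictAntiOn_of_deriv_neg (convex_Ioi 0) hFc
    intro x hx
    rw [interior_Ioi] at hx
    rw [(hFd x hx).deriv]
    have := hfpos x hx
    simp only [neg_neg, neg_lt, neg_zero]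
    positivity
  -- positivity of F
  have hFpos : ∀ s, 0 < s → 0 < F s := by
    intro s hs
    rw [hF s hs]
    rw [setIntegral_pos_iff_support_of_nonneg_ae ?h1 (hint s hs)]
    · refine lt_of_lt_of_le ?_ (measure_mono (?_ : Ioi s ⊆ _))
      · simp [Real.volume_Ioi]
      · intro τ hτ
        have hτ0 : 0 < f τ := hfpos τ (hs.trans hτ)
        exact ⟨by simp [Function.mem_support]; positivity, hτ⟩
    case h1 =>
      filter_upwards [ae_restrict_mem measurableSet_Ioi] with τ hτ
      have : 0 < f τ := hfpos τ (hs.trans hτ)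
      positivity
  have hFβ : 0 < F β := hFpos β hβ
  set a := (F β) ^ (-(1/2) : ℝ) with ha
  have ha0 : 0 < a := Real.rpow_pos_of_pos hFβ _
  have hasq : a ^ 2 = (F β)⁻¹ := by
    rw [ha, ← Real.rpow_natCast ((F β) ^ (-(1/2):ℝ)) 2, ← Real.rpow_mul hFβ.le]
    norm_num [Real.rpow_neg_one]
  -- facts about t^{-2}
  have htfacts : ∀ t, a < t → 0 < t ^ (-2:ℤ) ∧ t ^ (-2:ℤ) < F β := by
    intro t ht
    have ht0 : 0 < t := ha0.trans ht
    refine ⟨by positivity, ?_⟩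
    have h1 : a ^ 2 < t ^ 2 := by nlinarith
    have h2 : (F β)⁻¹ < t ^ 2 := hasq ▸ h1
    have h3 : t ^ (-2:ℤ) = (t ^ 2)⁻¹ := by
      rw [zpow_neg, zpow_two, sq]
    rw [h3]
    have h4 : (t ^ 2)⁻¹ < ((F β)⁻¹)⁻¹ := by
      apply inv_strictAnti₀ (by positivity) h2
    simpa using h4
  -- strict membership of Finv
  have hψmem : ∀ u, 0 < u → u < F β → β < Finv u ∧ F (Finv u) = u := by
    intro u hu huβ
    obtain ⟨h1, h2⟩ := hFinv_right u hu huβ.le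
    refine ⟨lt_of_le_of_ne h1 ?_, h2⟩
    intro heq
    rw [← heq] at h2
    exact absurd h2 (by intro h; rw [h] at huβ; exact lt_irrefl _ huβ)
  -- continuity of Finv
  have hψcont : ∀ u, 0 < u → u < F β → ContinuousAt Finv u := by
    intro u hu huβ
    obtain ⟨hs1, hs2⟩ := hψmem u hu huβ
    set s0 := Finv u with hs0def
    have hs0 : 0 < s0 := hβ.trans hs1
    rw [ContinuousAt, Metric.tendsto_nhds]
    intro ε hε
    set ε' := min (ε/2) ((s0 - β)/2) with hε'
    have hε'0 : 0 < ε' := by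
      apply lt_min (by linarith) (by linarith)
    have hε'ε : ε' < ε := lt_of_le_of_lt (min_le_left _ _) (by linarith)
    have hβlt : β < s0 - ε' := by
      have : ε' ≤ (s0 - β)/2 := min_le_right _ _
      linarith
    have h01 : 0 < s0 - ε' := hβ.trans hβlt
    have h02 : 0 < s0 + ε' := by linarith
    have hFlo : F (s0 + ε') < u := by
      rw [← hs2]; exact hFanti (mem_Ioi.mpr hs0) (mem_Ioi.mpr h02) (by linarith)
    have hFhi : u < F (s0 - ε') := by
      rw [← hs2]; exact hFanti (mem_Ioi.mpr h01) (mem_Ioi.mpr hs0) (by linarith)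
    have hFhiβ : F (s0 - ε') < F β := hFanti (mem_Ioi.mpr hβ) (mem_Ioi.mpr h01) hβlt
    filter_upwards [IsOpen.mem_nhds isOpen_Ioo
      (show u ∈ Ioo (F (s0 + ε')) (F (s0 - ε')) from ⟨hFlo, hFhi⟩)] with y hy
    have hy0 : 0 < y := lt_trans (hFpos _ h02) hy.1
    have hyβ : y ≤ F β := le_of_lt (hy.2.trans hFhiβ)
    obtain ⟨hb, hFy⟩ := hFinv_right y hy0 hyβ
    have hby : 0 < Finv y := hβ.trans_le hb
    have h1 : Finv y < s0 + ε' := by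
      by_contra h
      push_neg at h
      have := hFanti.antitoneOn (mem_Ioi.mpr h02) (mem_Ioi.mpr hby) h
      rw [hFy] at this
      exact absurd hy.1 (not_lt.mpr this)
    have h2 : s0 - ε' < Finv y := by
      by_contra h
      push_neg at h
      have := hFanti.antitoneOn (mem_Ioi.mpr hby) (mem_Ioi.mpr h01) h
      rw [hFy] at this
      exact absurd hy.2 (not_lt.mpr this)
    rw [Real.dist_eq, abs_lt]
    refine ⟨by linarith, by linarith⟩
  -- derivative of Finv
  have hψd : ∀ u, 0 < u → u < F β → HasDerivAt Finv (-(f (Finv u))) u := by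
    intro u hu huβ
    obtain ⟨hs1, hs2⟩ := hψmem u hu huβ
    have hs0 : 0 < Finv u := hβ.trans hs1
    have hfpos' : 0 < f (Finv u) := hfpos _ hs0
    have hne : -(1 / f (Finv u)) ≠ 0 := by
      simp only [ne_eq, neg_eq_zero, one_div, inv_eq_zero]
      exact hfpos'.ne'
    have hfg : ∀ᶠ y in nhds u, F (Finv y) = y := by
      filter_upwards [IsOpen.mem_nhds isOpen_Ioo (show u ∈ Ioo 0 (F β) from ⟨hu, huβ⟩)] with y hy
      exact (hFinv_right y hy.1 hy.2.le).2
    have h := HasDerivAt.of_local_left_inverse (hψcont u hu huβ) (hFd _ hs0) hne hfg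
    exact h.congr_deriv (by simp)
  -- the function g and its derivative
  set g : ℝ → ℝ := fun t => Finv (t ^ (-2:ℤ)) with hgdef
  have hgd : ∀ t, a < t → HasDerivAt g (2 * f (g t) * t ^ (-3:ℤ)) t := by
    intro t ht
    have ht0 : 0 < t := ha0.trans ht
    obtain ⟨hu0, huβ⟩ := htfacts t ht
    have h1 := hψd _ hu0 huβ
    have h2 : HasDerivAt (fun t : ℝ => t ^ (-2:ℤ)) ((-2 : ℝ) * t ^ (-3:ℤ)) t := by
      have := hasDerivAt_zpow (-2) t (Or.inl ht0.ne')
      exact this.congr_deriv (by norm_num)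
    have h3 := h1.comp t h2
    rw [show (2 : ℝ) * f (g t) * t ^ (-3:ℤ) =
      -f (Finv (t ^ (-2:ℤ))) * (-2 * t ^ (-3:ℤ)) from by simp only [hgdef]; ring]
    exact h3
  set E : ℝ → ℝ := fun t => 2 * f (g t) * t ^ (-3:ℤ) with hEdef
  have hEd : ∀ t, a < t →
      HasDerivAt E (2 * (deriv f (g t) * (2 * f (g t) * t ^ (-3:ℤ))) * t ^ (-3:ℤ)
        + (2 * f (g t)) * ((-3 : ℝ) * t ^ (-4:ℤ))) t := by
    intro t ht
    have ht0 : 0 < t := ha0.trans ht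
    obtain ⟨hu0, huβ⟩ := htfacts t ht
    have hsβ : β < g t := (hψmem _ hu0 huβ).1
    have hfd : HasDerivAt f (deriv f (g t)) (g t) :=
      ((hf.contDiffAt (Ici_mem_nhds (hβ.trans hsβ))).differentiableAt one_ne_zero).hasDerivAt
    have h1' := hfd.comp t (hgd t ht)
    have h1 : HasDerivAt (fun t => f (g t)) (deriv f (g t) * (2 * f (g t) * t ^ (-3:ℤ))) t := h1'
    have h2 : HasDerivAt (fun t : ℝ => t ^ (-3:ℤ)) ((-3 : ℝ) * t ^ (-4:ℤ)) t := by
      have := hasDerivAt_zpow (-3) t (Or.inl ht0.ne')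
      exact this.congr_deriv (by norm_num)
    exact (h1.const_mul 2).mul h2
  -- second derivative nonpositive
  have hEderiv_nonpos : ∀ t ∈ interior (Ioi a), deriv E t ≤ 0 := by
    intro t ht
    rw [interior_Ioi] at ht
    rw [(hEd t ht).deriv]
    obtain ⟨hu0, huβ⟩ := htfacts t ht
    obtain ⟨hsβ, hFs⟩ := hψmem _ hu0 huβ
    have hkey : deriv f (g t) * t ^ (-2:ℤ) ≤ 1 := by
      have := hfF (g t) hsβ.le
      rwa [hFs] at this
    have hA : 0 < f (g t) := hfpos _ (hβ.trans hsβ)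
    have hB : 0 < deriv f (g t) := hf'pos _ (hβ.trans hsβ)
    have ht0 : 0 < t := ha0.trans ht
    have epow : ∀ n : ℕ, t ^ (-(n:ℤ)) = (t⁻¹) ^ n := fun n => by
      rw [zpow_neg, ← inv_zpow, zpow_natCast]
    have e2 : t ^ (-2:ℤ) = (t⁻¹) ^ 2 := epow 2
    have e3 : t ^ (-3:ℤ) = (t⁻¹) ^ 3 := epow 3
    have e4 : t ^ (-4:ℤ) = (t⁻¹) ^ 4 := epow 4
    rw [e3, e4]
    rw [e2] at hkey
    set v := t⁻¹ with hv
    have hv0 : 0 < v := by positivity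
    nlinarith [mul_le_mul_of_nonneg_left hkey (by positivity : (0:ℝ) ≤ f (g t) * v ^ 4),
      mul_pos hA (pow_pos hv0 4)]
  -- antitone derivative
  have hEanti : AntitoneOn E (Ioi a) := by
    apply antitoneOn_of_deriv_nonpos (convex_Ioi a)
    · exact fun t ht => (hEd t ht).continuousAt.continuousWithinAt
    · intro t ht
      rw [interior_Ioi] at ht
      exact (hEd t ht).differentiableAt.differentiableWithinAt
    · exact hEderiv_nonpos
  have hconc : ConcaveOn ℝ (Ioi a) g := by
    apply AntitoneOn.concaveOn_of_deriv (convex_Ioi a)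
    · exact fun t ht => (hgd t ht).continuousAt.continuousWithinAt
    · intro t ht
      rw [interior_Ioi] at ht
      exact (hgd t ht).differentiableAt.differentiableWithinAt
    · rw [interior_Ioi]
      intro x hx y hy hxy
      rw [(hgd x hx).deriv, (hgd y hy).deriv]
      exact hEanti hx hy hxy
  refine concaveOn_congr' hconc ?_
  intro t ht
  have ht0 : 0 < t := ha0.trans ht
  have : t ^ (-(2:ℝ)) = t ^ (-2:ℤ) := by
    rw [← Real.rpow_intCast t (-2)]; norm_num
  simp [hgdef, this]
end

section
/- Let f, F, β be as above with f'(s)F(s) ≤ 1 for s ≥ β and β − 2 f(β) F(β) ≥ 0. Define H : [0,∞) → ℝ by H(t) = F⁻¹(t⁻²) for t > F(β)^{−1/2}, and H(t) = 2 F(β)^{3/2} f(β) (t − F(β)^{−1/2}) + β for 0 ≤ t ≤ F(β)^{−1/2}. Then H is concave, nondecreasing on [0,∞), and H(0) ≥ 0. -/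
open Set MeasureTheory Filter

/-- With `f, F, β` as before (`f'(s)F(s) ≤ 1` for `s ≥ β` and
`β - 2 f(β) F(β) ≥ 0`), the function `H` equal to `F⁻¹(t⁻²)` for
`t > F(β)^(-1/2)` and to the tangent line
`2 F(β)^(3/2) f(β) (t - F(β)^(-1/2)) + β` for `0 ≤ t ≤ F(β)^(-1/2)` is
concave and nondecreasing on `[0,∞)`, with `H 0 ≥ 0`. -/
theorem stmt8
    (f : ℝ → ℝ) (hf : ContDiffOn ℝ 1 f (Ici 0))
    (hfpos : ∀ s > (0:ℝ), 0 < f s) (hf'pos : ∀ s > (0:ℝ), 0 < deriv f s)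
    (hint : ∀ s > (0:ℝ), IntegrableOn (fun τ => 1 / f τ) (Ioi s))
    (F : ℝ → ℝ) (hF : ∀ s > (0:ℝ), F s = ∫ τ in Ioi s, 1 / f τ)
    (β : ℝ) (hβ : 0 < β) (hfF : ∀ s ≥ β, deriv f s * F s ≤ 1)
    (hβ2 : 0 ≤ β - 2 * f β * F β)
    (Finv : ℝ → ℝ)
    (hFinv_left : ∀ s > (0:ℝ), Finv (F s) = s)
    (hFinv_right : ∀ u : ℝ, 0 < u → u ≤ F β → β ≤ Finv u ∧ F (Finv u) = u)
    (H : ℝ → ℝ)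
    (hH₁ : ∀ t : ℝ, (F β) ^ (-(1/2) : ℝ) < t → H t = Finv (t ^ (-(2:ℝ))))
    (hH₂ : ∀ t : ℝ, 0 ≤ t → t ≤ (F β) ^ (-(1/2) : ℝ) →
      H t = 2 * (F β) ^ ((3:ℝ)/2) * f β * (t - (F β) ^ (-(1/2) : ℝ)) + β) :
    ConcaveOn ℝ (Ici 0) H ∧ MonotoneOn H (Ici 0) ∧ 0 ≤ H 0 := by
  set t₀ : ℝ := (F β) ^ (-(1/2) : ℝ) with ht₀def
  set c : ℝ := 2 * (F β) ^ ((3:ℝ)/2) * f β with hcdef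
  -- basic continuity/differentiability of f
  have hfc : ContinuousOn f (Ici 0) := hf.continuousOn
  have hfd : DifferentiableOn ℝ f (Ici 0) := hf.differentiableOn one_ne_zero
  have hfCA : ∀ s > (0:ℝ), ContinuousAt f s := fun s hs =>
    (hfc s hs.le).continuousAt (Ici_mem_nhds hs)
  have hfDA : ∀ s > (0:ℝ), DifferentiableAt ℝ f s := fun s hs =>
    (hfd s hs.le).differentiableAt (Ici_mem_nhds hs)
  -- positivity of F
  have hFpos : ∀ s > (0:ℝ), 0 < F s := by
    intro s hs
    rw [hF s hs]
    refine (setIntegral_pos_iff_support_of_nonneg_ae ?_ (hint s hs)).2 ?_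
    · refine (ae_restrict_iff' measurableSet_Ioi).2 (ae_of_all _ fun τ hτ => ?_)
      simp only [Pi.zero_apply]
      have := hfpos τ (hs.trans hτ)
      positivity
    · have hsub : Ioi s ⊆ (Function.support fun τ => 1 / f τ) ∩ Ioi s := by
        intro τ hτ
        exact ⟨ne_of_gt (one_div_pos.2 (hfpos τ (hs.trans hτ))), hτ⟩
      refine lt_of_lt_of_le ?_ (measure_mono hsub)
      rw [Real.volume_Ioi]
      exact ENNReal.zero_lt_top
  have hFβ : 0 < F β := hFpos β hβ
  have hfβ : 0 < f β := hfpos β hβ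
  have ht₀ : 0 < t₀ := Real.rpow_pos_of_pos hFβ _
  have hc : 0 < c := by
    have := Real.rpow_pos_of_pos hFβ ((3:ℝ)/2); positivity
  -- derivative of F
  have hFderiv : ∀ s > (0:ℝ), HasDerivAt F (-(1 / f s)) s := by
    intro s hs
    have ha : 0 < s / 2 := half_pos hs
    have has : s / 2 < s := half_lt_self hs
    have hint' : IntegrableOn (fun τ => 1 / f τ) (Ioi (s / 2)) := hint _ ha
    have key : ∀ x ∈ Ioi (s / 2), F x = F (s / 2) - ∫ τ in (s/2)..x, 1 / f τ := by
      intro x hx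
      have hx0 : 0 < x := ha.trans hx
      have hsplit : (∫ τ in Ioi (s/2), 1 / f τ)
          = (∫ τ in Ioc (s/2) x, 1 / f τ) + ∫ τ in Ioi x, 1 / f τ := by
        rw [← setIntegral_union Ioc_disjoint_Ioi_same measurableSet_Ioi
          (hint'.mono_set Ioc_subset_Ioi_self) (hint _ hx0),
          Ioc_union_Ioi_eq_Ioi (le_of_lt hx)]
      rw [hF x hx0, hF _ ha, intervalIntegral.integral_of_le (le_of_lt hx), hsplit]
      ring
    have hG : HasDerivAt (fun x => ∫ τ in (s/2)..x, 1 / f τ) (1 / f s) s := by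
      refine intervalIntegral.integral_hasDerivAt_right ?_ ?_ ?_
      · rw [intervalIntegrable_iff_integrableOn_Ioc_of_le has.le]
        exact hint'.mono_set Ioc_subset_Ioi_self
      · have hcont : ContinuousOn (fun τ => 1 / f τ) (Ioi 0) := by
          refine continuousOn_const.div (hfc.mono (Ioi_subset_Ici le_rfl)) ?_
          exact fun x hx => ne_of_gt (hfpos x hx)
        exact hcont.stronglyMeasurableAtFilter isOpen_Ioi s hs
      · exact continuousAt_const.div (hfCA s hs) (ne_of_gt (hfpos s hs))
    have hd : HasDerivAt (fun x => F (s/2) - ∫ τ in (s/2)..x, 1 / f τ) (-(1 / f s)) s :=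
      hG.const_sub (F (s/2))
    refine hd.congr_of_eventuallyEq ?_
    filter_upwards [Ioi_mem_nhds has] with x hx
    exact key x hx
  -- F is strictly antitone on Ioi 0
  have hFanti : StrictAntiOn F (Ioi 0) := by
    refine strictAntiOn_of_deriv_neg (convex_Ioi 0) ?_ ?_
    · exact fun x hx => ((hFderiv x hx).continuousAt).continuousWithinAt
    · intro x hx
      rw [interior_Ioi] at hx
      rw [(hFderiv x hx).deriv]
      have := hfpos x hx
      simp only [neg_neg, neg_lt, neg_zero]
      positivity
  have hFinvβ : Finv (F β) = β := hFinv_left β hβ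
  have hFinv_gt : ∀ u, 0 < u → u < F β → β < Finv u := by
    intro u hu huβ
    obtain ⟨h1, h2⟩ := hFinv_right u hu huβ.le
    rcases eq_or_lt_of_le h1 with h | h
    · rw [← h] at h2; exact absurd h2 (by intro hh; rw [hh] at huβ; exact lt_irrefl _ huβ)
    · exact h
  -- Finv is strictly antitone on Ioc 0 (F β)
  have hFinvanti : StrictAntiOn Finv (Ioc 0 (F β)) := by
    intro u hu v hv huv
    by_contra hle
    push_neg at hle
    obtain ⟨h1u, h2u⟩ := hFinv_right u hu.1 hu.2
    obtain ⟨h1v, h2v⟩ := hFinv_right v hv.1 hv.2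
    rcases eq_or_lt_of_le hle with h | h
    · rw [← h] at h2v
      rw [h2u] at h2v
      exact absurd h2v (ne_of_lt huv)
    · have := hFanti (mem_Ioi.2 (hβ.trans_le h1u)) (mem_Ioi.2 (hβ.trans_le h1v)) h
      rw [h2u, h2v] at this
      exact absurd huv (not_lt.2 this.le)
  -- images of Finv
  have himage₁ : Finv '' (Ioo 0 (F β)) = Ioi β := by
    ext x
    constructor
    · rintro ⟨u, hu, rfl⟩
      exact hFinv_gt u hu.1 hu.2
    · intro hx
      have hx0 : 0 < x := hβ.trans hx
      refine ⟨F x, ⟨hFpos x hx0, hFanti (mem_Ioi.2 hβ) (mem_Ioi.2 hx0) hx⟩, hFinv_left x hx0⟩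
  have himage₂ : Finv '' (Ioc 0 (F β)) = Ici β := by
    ext x
    constructor
    · rintro ⟨u, hu, rfl⟩
      exact (hFinv_right u hu.1 hu.2).1
    · intro hx
      have hx0 : 0 < x := hβ.trans_le hx
      refine ⟨F x, ⟨hFpos x hx0, ?_⟩, hFinv_left x hx0⟩
      rcases eq_or_lt_of_le (mem_Ici.1 hx) with h | h
      · rw [← h]
      · exact (hFanti (mem_Ioi.2 hβ) (mem_Ioi.2 hx0) h).le
  -- continuity of Finv at interior points
  have hFinvCA : ∀ u, 0 < u → u < F β → ContinuousAt Finv u := by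
    intro u hu huβ
    have hmono : StrictMonoOn (fun w => -(Finv w)) (Ioo 0 (F β)) := by
      intro a ha b hb hab
      exact neg_lt_neg (hFinvanti (Ioo_subset_Ioc_self ha) (Ioo_subset_Ioc_self hb) hab)
    have himg : (fun w => -(Finv w)) '' (Ioo 0 (F β)) = Iio (-β) := by
      have : (fun w => -(Finv w)) = (Neg.neg ∘ Finv) := rfl
      rw [this, image_comp, himage₁, Set.image_neg_Ioi]
    have hCA : ContinuousAt (fun w => -(Finv w)) u := by
      refine StrictMonoOn.continuousAt_of_image_mem_nhds hmono
        (Ioo_mem_nhds hu huβ) ?_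
      rw [himg]
      exact Iio_mem_nhds (neg_lt_neg (hFinv_gt u hu huβ))
    have := hCA.neg
    convert this using 1; funext w; simp
  -- left-continuity of Finv at F β
  have hFinvCWA : ContinuousWithinAt Finv (Iic (F β)) (F β) := by
    have hmono : StrictMonoOn (fun w => -(Finv w)) (Ioc 0 (F β)) := by
      intro a ha b hb hab
      exact neg_lt_neg (hFinvanti ha hb hab)
    have himg : (fun w => -(Finv w)) '' (Ioc 0 (F β)) = Iic (-β) := by
      have : (fun w => -(Finv w)) = (Neg.neg ∘ Finv) := rfl
      rw [this, image_comp, himage₂, Set.image_neg_Ici]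
    have hCWA : ContinuousWithinAt (fun w => -(Finv w)) (Iic (F β)) (F β) := by
      refine StrictMonoOn.continuousWithinAt_left_of_image_mem_nhdsWithin hmono ?_ ?_
      · exact mem_nhdsWithin.2 ⟨Ioi 0, isOpen_Ioi, hFβ, fun x hx => ⟨hx.1, hx.2⟩⟩
      · rw [himg]
        have : -(Finv (F β)) = -β := by rw [hFinvβ]
        rw [this]
        exact self_mem_nhdsWithin
    have := hCWA.neg
    convert this using 1; funext w; simp
  -- the curved piece
  set g : ℝ → ℝ := fun t => Finv (t ^ (-(2:ℝ))) with hgdef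
  have ht₀inv : t₀ ^ (-(2:ℝ)) = F β := by
    rw [ht₀def, ← Real.rpow_mul hFβ.le]
    norm_num
  have ht₀3 : t₀ ^ (-(3:ℝ)) = (F β) ^ ((3:ℝ)/2) := by
    rw [ht₀def, ← Real.rpow_mul hFβ.le]
    norm_num
  have hu_mem : ∀ t, t₀ < t → t ^ (-(2:ℝ)) ∈ Ioo 0 (F β) := by
    intro t ht
    have ht0 : 0 < t := ht₀.trans ht
    constructor
    · exact Real.rpow_pos_of_pos ht0 _
    · rw [← ht₀inv]
      exact Real.rpow_lt_rpow_of_neg ht₀ ht (by norm_num)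
  have hgt : ∀ t, t₀ < t → β < g t := fun t ht =>
    hFinv_gt _ (hu_mem t ht).1 (hu_mem t ht).2
  have hgF : ∀ t, t₀ < t → F (g t) = t ^ (-(2:ℝ)) := fun t ht =>
    (hFinv_right _ (hu_mem t ht).1 (hu_mem t ht).2.le).2
  have hg0 : g t₀ = β := by rw [hgdef]; simp only; rw [ht₀inv, hFinvβ]
  have hgderiv : ∀ t, t₀ < t → HasDerivAt g (2 * f (g t) * t ^ (-(3:ℝ))) t := by
    intro t ht
    have ht0 : 0 < t := ht₀.trans ht
    have hu := hu_mem t ht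
    have hx : β < Finv (t ^ (-(2:ℝ))) := hgt t ht
    have hx0 : 0 < Finv (t ^ (-(2:ℝ))) := hβ.trans hx
    have hfx : 0 < f (Finv (t ^ (-(2:ℝ)))) := hfpos _ hx0
    have hFd := hFderiv _ hx0
    have hne : -(1 / f (Finv (t ^ (-(2:ℝ))))) ≠ 0 := by
      simp only [ne_eq, neg_eq_zero, div_eq_zero_iff, one_ne_zero, false_or]
      exact ne_of_gt hfx
    have hev : ∀ᶠ y in nhds (t ^ (-(2:ℝ))), F (Finv y) = y := by
      filter_upwards [Ioo_mem_nhds hu.1 hu.2] with y hy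
      exact (hFinv_right y hy.1 hy.2.le).2
    have hinv : HasDerivAt Finv (-(1 / f (Finv (t ^ (-(2:ℝ))))))⁻¹ (t ^ (-(2:ℝ))) :=
      HasDerivAt.of_local_left_inverse (hFinvCA _ hu.1 hu.2) hFd hne hev
    have hpow : HasDerivAt (fun x : ℝ => x ^ (-(2:ℝ))) (-(2:ℝ) * t ^ ((-(2:ℝ)) - 1)) t :=
      Real.hasDerivAt_rpow_const (Or.inl (ne_of_gt ht0))
    have hcomp := hinv.comp t hpow
    have heq : (-(1 / f (Finv (t ^ (-(2:ℝ))))))⁻¹ * (-(2:ℝ) * t ^ ((-(2:ℝ)) - 1))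
        = 2 * f (g t) * t ^ (-(3:ℝ)) := by
      rw [show ((-(2:ℝ)) - 1) = (-(3:ℝ)) by norm_num]
      have : (-(1 / f (Finv (t ^ (-(2:ℝ))))))⁻¹ = -(f (Finv (t ^ (-(2:ℝ))))) := by
        field_simp
      rw [this, hgdef]
      ring
    rw [← heq]
    exact hcomp
  -- continuity of g from the right at t₀
  have hgCWA : ContinuousWithinAt g (Ici t₀) t₀ := by
    have h1 : ContinuousWithinAt (fun x : ℝ => x ^ (-(2:ℝ))) (Ici t₀) t₀ :=
      (Real.continuousAt_rpow_const t₀ _ (Or.inl (ne_of_gt ht₀))).continuousWithinAt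
    have h2 : ContinuousWithinAt Finv (Iic (F β)) (t₀ ^ (-(2:ℝ))) := by
      rw [ht₀inv]; exact hFinvCWA
    refine ContinuousWithinAt.comp h2 h1 ?_
    intro x hx
    have hx0 : 0 < x := lt_of_lt_of_le ht₀ hx
    rw [mem_Iic, ← ht₀inv]
    exact Real.rpow_le_rpow_of_nonpos ht₀ hx (by norm_num)
  have hgTendsto : Tendsto g (nhdsWithin t₀ (Ioi t₀)) (nhds β) := by
    have h := hgCWA.mono (Ioi_subset_Ici (le_refl t₀))
    unfold ContinuousWithinAt at h
    rwa [hg0] at h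
  have hceq : c = 2 * f β * t₀ ^ (-(3:ℝ)) := by rw [ht₀3, hcdef]; ring
  have hgderivTendsto : Tendsto (fun t => deriv g t) (nhdsWithin t₀ (Ioi t₀)) (nhds c) := by
    have heq : ∀ᶠ t in nhdsWithin t₀ (Ioi t₀), 2 * f (g t) * t ^ (-(3:ℝ)) = deriv g t := by
      filter_upwards [self_mem_nhdsWithin] with t ht
      exact ((hgderiv t ht).deriv).symm
    refine Tendsto.congr' heq ?_
    have h1 : Tendsto (fun t => f (g t)) (nhdsWithin t₀ (Ioi t₀)) (nhds (f β)) :=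
      Filter.Tendsto.comp (hfCA β hβ) hgTendsto
    have h2 : Tendsto (fun t : ℝ => t ^ (-(3:ℝ))) (nhdsWithin t₀ (Ioi t₀))
        (nhds (t₀ ^ (-(3:ℝ)))) :=
      ((Real.continuousAt_rpow_const t₀ _ (Or.inl (ne_of_gt ht₀))).tendsto).mono_left
        nhdsWithin_le_nhds
    have h3 : Tendsto (fun t => 2 * f (g t) * t ^ (-(3:ℝ))) (nhdsWithin t₀ (Ioi t₀))
        (nhds (2 * f β * t₀ ^ (-(3:ℝ)))) :=
      (Filter.Tendsto.mul (tendsto_const_nhds.mul h1) h2 : _)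
    rw [hceq]
    exact h3
  -- H agrees with the pieces
  have hHt₀ : H t₀ = β := by rw [hH₂ t₀ ht₀.le le_rfl]; ring
  have hHg : ∀ t, t₀ ≤ t → H t = g t := by
    intro t ht
    rcases eq_or_lt_of_le ht with h | h
    · rw [← h, hHt₀, hg0]
    · exact hH₁ t h
  -- derivatives of H
  have hlinederiv : ∀ t : ℝ, HasDerivAt (fun x : ℝ => c * (x - t₀) + β) c t := by
    intro t
    have := (((hasDerivAt_id t).sub_const t₀).const_mul c).add_const β
    simpa using this
  have hHderiv₁ : ∀ t, 0 < t → t < t₀ → HasDerivAt H c t := by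
    intro t h1 h2
    refine (hlinederiv t).congr_of_eventuallyEq ?_
    filter_upwards [Ioo_mem_nhds h1 h2] with x hx
    exact hH₂ x hx.1.le hx.2.le
  have hHderiv₂ : ∀ t, t₀ < t → HasDerivAt H (2 * f (g t) * t ^ (-(3:ℝ))) t := by
    intro t ht
    refine (hgderiv t ht).congr_of_eventuallyEq ?_
    filter_upwards [Ioi_mem_nhds ht] with x hx
    exact hH₁ x hx
  have hHderivt₀ : HasDerivAt H c t₀ := by
    have hright : HasDerivWithinAt H c (Ici t₀) t₀ := by
      have hg' : HasDerivWithinAt g c (Ici t₀) t₀ := by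
        refine hasDerivWithinAt_Ici_of_tendsto_deriv
          (fun t ht => (hgderiv t ht).differentiableAt.differentiableWithinAt)
          (hgCWA.mono (Ioi_subset_Ici (le_refl t₀))) self_mem_nhdsWithin hgderivTendsto
      exact hg'.congr (fun x hx => hHg x hx) (hHg t₀ le_rfl)
    have hleft : HasDerivWithinAt H c (Iic t₀) t₀ := by
      have hl : HasDerivWithinAt (fun x : ℝ => c * (x - t₀) + β) c (Iic t₀) t₀ :=
        (hlinederiv t₀).hasDerivWithinAt
      refine hl.congr_of_eventuallyEq ?_ (by rw [hHt₀]; ring)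
      have hmem : Ioi (0:ℝ) ∩ Iic t₀ ∈ nhdsWithin t₀ (Iic t₀) :=
        inter_mem (mem_nhdsWithin_of_mem_nhds (Ioi_mem_nhds ht₀)) self_mem_nhdsWithin
      filter_upwards [hmem] with x hx
      exact hH₂ x hx.1.le hx.2
    have hu := hleft.union hright
    rw [Iic_union_Ici] at hu
    exact hasDerivWithinAt_univ.1 hu
  -- the derivative function of the curved piece
  set φ : ℝ → ℝ := fun t => 2 * f (g t) * t ^ (-(3:ℝ)) with hφdef
  have hφt₀ : φ t₀ = c := by rw [hφdef]; simp only; rw [hg0, ht₀3, hcdef]; ring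
  have hφderiv : ∀ t, t₀ < t → HasDerivAt φ
      ((2 * (deriv f (g t) * (2 * f (g t) * t ^ (-(3:ℝ))))) * t ^ (-(3:ℝ))
        + (2 * f (g t)) * (-(3:ℝ) * t ^ ((-(3:ℝ)) - 1))) t := by
    intro t ht
    have ht0 : 0 < t := ht₀.trans ht
    have hgx : 0 < g t := hβ.trans (hgt t ht)
    have hfg : HasDerivAt (fun x => f (g x)) (deriv f (g t) * (2 * f (g t) * t ^ (-(3:ℝ)))) t :=
      ((hfDA (g t) hgx).hasDerivAt).comp t (hgderiv t ht)
    have h1 : HasDerivAt (fun x => 2 * f (g x)) (2 * (deriv f (g t) * (2 * f (g t) * t ^ (-(3:ℝ))))) t :=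
      hfg.const_mul 2
    have h2 : HasDerivAt (fun x : ℝ => x ^ (-(3:ℝ))) (-(3:ℝ) * t ^ ((-(3:ℝ)) - 1)) t :=
      Real.hasDerivAt_rpow_const (Or.inl (ne_of_gt ht0))
    exact h1.mul h2
  have hφnonpos : ∀ t, t₀ < t →
      (2 * (deriv f (g t) * (2 * f (g t) * t ^ (-(3:ℝ))))) * t ^ (-(3:ℝ))
        + (2 * f (g t)) * (-(3:ℝ) * t ^ ((-(3:ℝ)) - 1)) ≤ 0 := by
    intro t ht
    have ht0 : 0 < t := ht₀.trans ht
    have hgx : 0 < g t := hβ.trans (hgt t ht)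
    have hfg : 0 < f (g t) := hfpos _ hgx
    have hdf : 0 < deriv f (g t) := hf'pos _ hgx
    have hkey : deriv f (g t) * t ^ (-(2:ℝ)) ≤ 1 := by
      have := hfF (g t) (hgt t ht).le
      rwa [hgF t ht] at this
    have e1 : ((-(3:ℝ)) - 1) = (-(4:ℝ)) := by norm_num
    have e2 : t ^ (-(3:ℝ)) * t ^ (-(3:ℝ)) = t ^ (-(2:ℝ)) * t ^ (-(4:ℝ)) := by
      rw [← Real.rpow_add ht0, ← Real.rpow_add ht0]; norm_num
    have ht4 : 0 < t ^ (-(4:ℝ)) := Real.rpow_pos_of_pos ht0 _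
    have hval : (2 * (deriv f (g t) * (2 * f (g t) * t ^ (-(3:ℝ))))) * t ^ (-(3:ℝ))
        + (2 * f (g t)) * (-(3:ℝ) * t ^ ((-(3:ℝ)) - 1))
        = 4 * (deriv f (g t) * t ^ (-(2:ℝ))) * f (g t) * t ^ (-(4:ℝ))
          - 6 * f (g t) * t ^ (-(4:ℝ)) := by
      rw [e1]
      calc (2 * (deriv f (g t) * (2 * f (g t) * t ^ (-(3:ℝ))))) * t ^ (-(3:ℝ))
            + (2 * f (g t)) * (-(3:ℝ) * t ^ (-(4:ℝ)))
          = 4 * deriv f (g t) * f (g t) * (t ^ (-(3:ℝ)) * t ^ (-(3:ℝ)))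
            - 6 * f (g t) * t ^ (-(4:ℝ)) := by ring
        _ = 4 * (deriv f (g t) * t ^ (-(2:ℝ))) * f (g t) * t ^ (-(4:ℝ))
            - 6 * f (g t) * t ^ (-(4:ℝ)) := by rw [e2]; ring
    rw [hval]
    nlinarith [mul_pos hfg ht4, hkey]
  -- φ is antitone on Ici t₀
  have hφcont : ContinuousOn φ (Ici t₀) := by
    intro t ht
    rcases eq_or_lt_of_le (mem_Ici.1 ht) with h | h
    · rw [← h]
      have h1 : ContinuousWithinAt (fun x => f (g x)) (Ici t₀) t₀ := by
        have hfgt : ContinuousAt f (g t₀) := by rw [hg0]; exact hfCA β hβ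
        exact hfgt.comp_continuousWithinAt hgCWA
      have h2 : ContinuousWithinAt (fun x : ℝ => x ^ (-(3:ℝ))) (Ici t₀) t₀ :=
        (Real.continuousAt_rpow_const t₀ _ (Or.inl (ne_of_gt ht₀))).continuousWithinAt
      refine ContinuousWithinAt.congr ((h1.const_smul (2:ℝ)).mul h2) (fun x _ => ?_) ?_
      · simp only [smul_eq_mul, hφdef, Pi.mul_apply, Pi.smul_apply]
      · simp only [smul_eq_mul, hφdef, Pi.mul_apply, Pi.smul_apply]
    · exact ((hφderiv t h).continuousAt).continuousWithinAt
  have hφanti : AntitoneOn φ (Ici t₀) := by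
    refine antitoneOn_of_deriv_nonpos (convex_Ici t₀) hφcont ?_ ?_
    · rw [interior_Ici]
      exact fun t ht => (hφderiv t ht).differentiableAt.differentiableWithinAt
    · rw [interior_Ici]
      intro t ht
      rw [(hφderiv t ht).deriv]
      exact hφnonpos t ht
  -- description of deriv H
  have hderivH : ∀ t, 0 < t → deriv H t = if t ≤ t₀ then c else φ t := by
    intro t ht
    rcases lt_trichotomy t t₀ with h | h | h
    · rw [if_pos h.le, (hHderiv₁ t ht h).deriv]
    · subst h
      rw [if_pos le_rfl, hHderivt₀.deriv]
    · rw [if_neg (not_le.2 h), (hHderiv₂ t h).deriv]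
  -- continuity of H on Ici 0
  have hHcont : ContinuousOn H (Ici 0) := by
    intro t ht
    rcases lt_trichotomy t t₀ with h | h | h
    · have hline : ContinuousWithinAt (fun x : ℝ => c * (x - t₀) + β) (Ici 0) t :=
        (((continuous_const.mul (continuous_id.sub continuous_const)).add
          continuous_const).continuousWithinAt)
      refine hline.congr_of_eventuallyEq ?_ (hH₂ t ht h.le)
      have hmem : Ici (0:ℝ) ∩ Iio t₀ ∈ nhdsWithin t (Ici (0:ℝ)) :=
        inter_mem self_mem_nhdsWithin (mem_nhdsWithin_of_mem_nhds (Iio_mem_nhds h))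
      filter_upwards [hmem] with x hx
      exact hH₂ x hx.1 hx.2.le
    · subst h
      exact hHderivt₀.continuousAt.continuousWithinAt
    · exact (hHderiv₂ t h).continuousAt.continuousWithinAt
  -- differentiability of H on Ioi 0
  have hHdiff : DifferentiableOn ℝ H (Ioi 0) := by
    intro t ht
    rcases lt_trichotomy t t₀ with h | h | h
    · exact (hHderiv₁ t ht h).differentiableAt.differentiableWithinAt
    · subst h
      exact hHderivt₀.differentiableAt.differentiableWithinAt
    · exact (hHderiv₂ t h).differentiableAt.differentiableWithinAt
  -- antitone derivative
  have hanti : AntitoneOn (deriv H) (Ioi 0) := by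
    intro x hx y hy hxy
    rw [hderivH x hx, hderivH y hy]
    rcases le_or_gt y t₀ with h | h
    · rw [if_pos (hxy.trans h), if_pos h]
    · rw [if_neg (not_le.2 h)]
      rcases le_or_gt x t₀ with h2 | h2
      · rw [if_pos h2, ← hφt₀]
        exact hφanti self_mem_Ici (mem_Ici.2 h.le) h.le
      · rw [if_neg (not_le.2 h2)]
        exact hφanti (mem_Ici.2 h2.le) (mem_Ici.2 (h2.trans_le hxy).le) hxy
  -- nonneg derivative
  have hnonneg : ∀ t ∈ interior (Ici (0:ℝ)), 0 ≤ deriv H t := by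
    rw [interior_Ici]
    intro t ht
    rw [hderivH t ht]
    split_ifs with h
    · exact hc.le
    · push_neg at h
      have ht0 : 0 < t := ht₀.trans h
      have := hfpos (g t) (hβ.trans (hgt t h))
      have := Real.rpow_pos_of_pos ht0 (-(3:ℝ))
      positivity
  refine ⟨?_, ?_, ?_⟩
  · refine AntitoneOn.concaveOn_of_deriv (convex_Ici 0) hHcont ?_ ?_
    · rw [interior_Ici]; exact hHdiff
    · rw [interior_Ici]; exact hanti
  · refine monotoneOn_of_deriv_nonneg (convex_Ici 0) hHcont ?_ hnonneg
    rw [interior_Ici]; exact hHdiff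
  · rw [hH₂ 0 le_rfl ht₀.le]
    have hmul : (F β) ^ ((3:ℝ)/2) * (F β) ^ (-(1/2) : ℝ) = F β := by
      rw [← Real.rpow_add hFβ]; norm_num
    have : 2 * (F β) ^ ((3:ℝ)/2) * f β * (0 - t₀) + β
        = β - 2 * f β * ((F β) ^ ((3:ℝ)/2) * t₀) := by ring
    rw [this, ht₀def, hmul]
    linarith
end

section
/- Let f be C¹ on [0,∞) with f, f' > 0 on (0,∞), F(s) = ∫_s^∞ dτ/f(τ) < ∞, and let w : (0,T)×B_R → ℝ be a positive C^{1,2} solution of ∂_t w − Δw = w³/2 with w ≥ F(β)^{−1/2}, where β satisfies f'(s)F(s) ≤ 1 for all s ≥ β. Then ū := F⁻¹(w⁻²) satisfies ∂_t ū − Δū − f(ū) = 4 f(ū) w⁻⁴ |∇w|² (3/2 − f'(ū)F(ū)) ≥ 0 pointwise on (0,T)×B_R; in particular ū is a (classical) supersolution of ∂_t u = Δu + f(u). -/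
open Set MeasureTheory Metric

/-- The Laplacian of `f : ℝ² → ℝ` at `x`, as the trace of the second derivative. -/
noncomputable def lap (f : EuclideanSpace ℝ (Fin 2) → ℝ) (x : EuclideanSpace ℝ (Fin 2)) : ℝ :=
  ∑ i : Fin 2,
    iteratedFDeriv ℝ 2 f x ![EuclideanSpace.single i 1, EuclideanSpace.single i 1]

/-- Composition formula for the Laplacian: if `g` is `C²` near `x` and `φ` has derivative
`ψ` along the range of `g`, with `ψ` differentiable at `g x`, then
`Δ(φ ∘ g) = ψ(g x) Δg + ψ'(g x) ‖∇g‖²`. -/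
theorem lap_comp (φ ψ : ℝ → ℝ) (ψ' : ℝ)
    (g : EuclideanSpace ℝ (Fin 2) → ℝ) (R : ℝ)
    (x : EuclideanSpace ℝ (Fin 2)) (hx : x ∈ ball (0 : EuclideanSpace ℝ (Fin 2)) R)
    (hg : ContDiffOn ℝ 2 g (ball (0 : EuclideanSpace ℝ (Fin 2)) R))
    (hφ : ∀ y ∈ ball (0 : EuclideanSpace ℝ (Fin 2)) R, HasDerivAt φ (ψ (g y)) (g y))
    (hψ : HasDerivAt ψ ψ' (g x)) :
    lap (fun y => φ (g y)) x
      = ψ (g x) * lap g x + ψ' * ‖gradient g x‖ ^ 2 := by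
  have hB : IsOpen (ball (0 : EuclideanSpace ℝ (Fin 2)) R) := isOpen_ball
  have hgAt : ∀ y ∈ ball (0 : EuclideanSpace ℝ (Fin 2)) R, ContDiffAt ℝ 2 g y :=
    fun y hy => hg.contDiffAt (hB.mem_nhds hy)
  have hgd : ∀ y ∈ ball (0 : EuclideanSpace ℝ (Fin 2)) R, HasFDerivAt g (fderiv ℝ g y) y :=
    fun y hy => ((hgAt y hy).differentiableAt (by norm_num)).hasFDerivAt
  have hcomp : ∀ y ∈ ball (0 : EuclideanSpace ℝ (Fin 2)) R,
      HasFDerivAt (fun z => φ (g z)) (ψ (g y) • fderiv ℝ g y) y := fun y hy =>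
    (hφ y hy).comp_hasFDerivAt y (hgd y hy)
  have hfd : ∀ y ∈ ball (0 : EuclideanSpace ℝ (Fin 2)) R,
      fderiv ℝ (fun z => φ (g z)) y = ψ (g y) • fderiv ℝ g y :=
    fun y hy => (hcomp y hy).fderiv
  have hc : HasFDerivAt (fun y => ψ (g y)) (ψ' • fderiv ℝ g x) x :=
    hψ.comp_hasFDerivAt x (hgd x hx)
  have hL : HasFDerivAt (fderiv ℝ g) (fderiv ℝ (fderiv ℝ g) x) x :=
    (((hgAt x hx).fderiv_right (m := 1) (le_refl 2)).differentiableAt (by norm_num)).hasFDerivAt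
  have hD2 : HasFDerivAt (fun y => ψ (g y) • fderiv ℝ g y)
      (ψ (g x) • fderiv ℝ (fderiv ℝ g) x
        + (ψ' • fderiv ℝ g x).smulRight (fderiv ℝ g x)) x := hc.smul hL
  have hEv : fderiv ℝ (fun z => φ (g z)) =ᶠ[nhds x] fun y => ψ (g y) • fderiv ℝ g y :=
    Filter.eventuallyEq_of_mem (hB.mem_nhds hx) hfd
  have hD2' : fderiv ℝ (fderiv ℝ (fun z => φ (g z))) x
      = ψ (g x) • fderiv ℝ (fderiv ℝ g) x
        + (ψ' • fderiv ℝ g x).smulRight (fderiv ℝ g x) := by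
    rw [hEv.fderiv_eq]; exact hD2.fderiv
  have hgrad : ∀ i : Fin 2, fderiv ℝ g x (EuclideanSpace.single i 1) = gradient g x i := by
    intro i
    have : (inner ℝ (gradient g x) (EuclideanSpace.single i (1:ℝ)) : ℝ)
        = fderiv ℝ g x (EuclideanSpace.single i 1) := by
      rw [gradient]; exact InnerProductSpace.toDual_symm_apply
    rw [← this, EuclideanSpace.inner_single_right]
    simp
  have hnorm : ‖gradient g x‖ ^ 2
      = ∑ i : Fin 2, (fderiv ℝ g x (EuclideanSpace.single i 1)) ^ 2 := by
    simp_rw [hgrad]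
    rw [EuclideanSpace.norm_eq, Real.sq_sqrt (by positivity)]
    exact Finset.sum_congr rfl fun i _ => by rw [Real.norm_eq_abs, sq_abs]
  unfold lap
  simp only [iteratedFDeriv_two_apply, Matrix.cons_val_zero, Matrix.cons_val_one,
    Matrix.head_cons]
  rw [hD2']
  simp only [ContinuousLinearMap.add_apply, ContinuousLinearMap.smul_apply,
    ContinuousLinearMap.smulRight_apply, smul_eq_mul]
  rw [hnorm, Finset.mul_sum, Finset.mul_sum, ← Finset.sum_add_distrib]
  exact Finset.sum_congr rfl fun i _ => by ring

/-- generalized Cole–Hopf: if `w > 0` is a `C^{1,2}` solution of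
`∂ₜ w - Δ w = w³/2` on `(0,T) × B_R` with `w ≥ F(β)^{-1/2}`, where `f'(s)F(s) ≤ 1`
for `s ≥ β`, then `ū = F⁻¹(w⁻²)` satisfies
`∂ₜ ū - Δ ū - f(ū) = 4 f(ū) w⁻⁴ |∇w|² (3/2 - f'(ū) F(ū)) ≥ 0`;
in particular `ū` is a classical supersolution of `∂ₜ u = Δ u + f(u)`. -/
theorem stmt17
    (f : ℝ → ℝ) (hf : ContDiffOn ℝ 1 f (Ici 0))
    (hfpos : ∀ s > (0:ℝ), 0 < f s) (hf'pos : ∀ s > (0:ℝ), 0 < deriv f s)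
    (hint : ∀ s > (0:ℝ), IntegrableOn (fun τ => 1 / f τ) (Ioi s))
    (F : ℝ → ℝ) (hF : ∀ s > (0:ℝ), F s = ∫ τ in Ioi s, 1 / f τ)
    (β : ℝ) (hβ : 0 < β) (hfF : ∀ s ≥ β, deriv f s * F s ≤ 1)
    (Finv : ℝ → ℝ)
    (hFinv_left : ∀ s > (0:ℝ), Finv (F s) = s)
    (hFinv_right : ∀ u : ℝ, 0 < u → u ≤ F β → β ≤ Finv u ∧ F (Finv u) = u)
    (T R : ℝ) (hT : 0 < T) (hR : 0 < R)
    (w : ℝ → EuclideanSpace ℝ (Fin 2) → ℝ)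
    (hwreg : ∀ t ∈ Ioo 0 T, ContDiffOn ℝ 2 (w t) (ball (0 : EuclideanSpace ℝ (Fin 2)) R))
    (hwt : ∀ x ∈ ball (0 : EuclideanSpace ℝ (Fin 2)) R,
      ∀ t ∈ Ioo 0 T, DifferentiableAt ℝ (fun τ => w τ x) t)
    (hwlb : ∀ t ∈ Ioo 0 T, ∀ x ∈ ball (0 : EuclideanSpace ℝ (Fin 2)) R,
      (F β) ^ (-(1/2) : ℝ) ≤ w t x)
    (hwpos : ∀ t ∈ Ioo 0 T, ∀ x ∈ ball (0 : EuclideanSpace ℝ (Fin 2)) R, 0 < w t x)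
    (hheat : ∀ t ∈ Ioo 0 T, ∀ x ∈ ball (0 : EuclideanSpace ℝ (Fin 2)) R,
      deriv (fun τ => w τ x) t - lap (w t) x = (w t x) ^ 3 / 2) :
    ∀ t ∈ Ioo 0 T, ∀ x ∈ ball (0 : EuclideanSpace ℝ (Fin 2)) R,
      deriv (fun τ => Finv ((w τ x) ^ (-(2:ℝ)))) t
          - lap (fun y => Finv ((w t y) ^ (-(2:ℝ)))) x
          - f (Finv ((w t x) ^ (-(2:ℝ))))
        = 4 * f (Finv ((w t x) ^ (-(2:ℝ)))) * (w t x) ^ (-(4:ℝ))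
            * ‖gradient (w t) x‖ ^ 2
            * (3/2 - deriv f (Finv ((w t x) ^ (-(2:ℝ))))
                * F (Finv ((w t x) ^ (-(2:ℝ)))))
      ∧ 0 ≤ 4 * f (Finv ((w t x) ^ (-(2:ℝ)))) * (w t x) ^ (-(4:ℝ))
            * ‖gradient (w t) x‖ ^ 2
            * (3/2 - deriv f (Finv ((w t x) ^ (-(2:ℝ))))
                * F (Finv ((w t x) ^ (-(2:ℝ))))) := by
  have hfcAt : ∀ r > (0:ℝ), ContinuousAt f r := fun r hr =>
    hf.continuousOn.continuousAt (Ici_mem_nhds hr)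
  -- positivity of F β
  have hFβpos : 0 < F β := by
    rw [hF β hβ]
    rw [setIntegral_pos_iff_support_of_nonneg_ae ?h1 (hint β hβ)]
    case h1 =>
      filter_upwards [ae_restrict_mem measurableSet_Ioi] with τ hτ
      simp only [Pi.zero_apply]
      have := hfpos τ (hβ.trans hτ)
      positivity
    · have hsub : Ioi β ⊆ (Function.support fun τ => 1 / f τ) ∩ Ioi β := by
        intro τ hτ
        refine ⟨?_, hτ⟩
        have := hfpos τ (hβ.trans hτ)
        simp only [Function.mem_support]
        positivity
      calc (0:ENNReal) < volume (Ioi β) := by rw [Real.volume_Ioi]; simp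
        _ ≤ volume ((Function.support fun τ => 1 / f τ) ∩ Ioi β) := measure_mono hsub
  -- derivative of F
  have hFderiv : ∀ s > (0:ℝ), HasDerivAt F (-(1 / f s)) s := by
    intro s hs
    have ha0 : (0:ℝ) < s/2 := by linarith
    have hG : HasDerivAt (fun y => ∫ τ in (s/2)..y, 1 / f τ) (1 / f s) s := by
      apply intervalIntegral.integral_hasDerivAt_right
      · rw [intervalIntegrable_iff_integrableOn_Ioc_of_le (by linarith)]
        exact (hint _ ha0).mono_set Ioc_subset_Ioi_self
      · refine ContinuousAt.stronglyMeasurableAtFilter isOpen_Ioi ?_ s hs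
        intro r hr
        exact continuousAt_const.div (hfcAt r hr) (hfpos r hr).ne'
      · exact continuousAt_const.div (hfcAt s hs) (hfpos s hs).ne'
    have hkey : ∀ y ∈ Ioi (s/2), F y = F (s/2) - ∫ τ in (s/2)..y, 1 / f τ := by
      intro y hy
      have hy0 : 0 < y := lt_trans ha0 hy
      rw [hF y hy0, hF (s/2) ha0, intervalIntegral.integral_of_le (le_of_lt hy)]
      have hsplit : (∫ τ in Ioi (s/2), 1 / f τ)
          = (∫ τ in Ioc (s/2) y, 1 / f τ) + ∫ τ in Ioi y, 1 / f τ := by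
        rw [← MeasureTheory.setIntegral_union (Ioc_disjoint_Ioi le_rfl) measurableSet_Ioi
          ((hint _ ha0).mono_set Ioc_subset_Ioi_self) (hint y hy0),
          Ioc_union_Ioi_eq_Ioi (le_of_lt hy)]
      rw [hsplit]; ring
    have hF' : HasDerivAt (fun y => F (s/2) - ∫ τ in (s/2)..y, 1 / f τ) (-(1 / f s)) s := by
      exact ((hasDerivAt_const s (F (s/2))).sub hG).congr_deriv (by ring)
    exact hF'.congr_of_eventuallyEq
      (Filter.eventuallyEq_of_mem (Ioi_mem_nhds (by linarith : s/2 < s)) hkey)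
  -- derivative of the inverse function
  have hFinvd : ∀ u : ℝ, 0 < u → u ≤ F β → HasDerivAt Finv (-(f (Finv u))) u := by
    intro u hu huβ
    have hFC1 : ContDiffOn ℝ 1 F (Ioi 0) := by
      rw [show (1:WithTop ℕ∞) = 0 + 1 from (zero_add 1).symm,
        contDiffOn_succ_iff_deriv_of_isOpen isOpen_Ioi]
      refine ⟨fun s hs => ((hFderiv s hs).differentiableAt).differentiableWithinAt, by simp, ?_⟩
      rw [contDiffOn_zero]
      have h : ∀ s ∈ Ioi (0:ℝ), deriv F s = -(1 / f s) := fun s hs => (hFderiv s hs).deriv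
      refine ContinuousOn.congr ?_ h
      exact (continuousOn_const.div (fun s hs => (hfcAt s hs).continuousWithinAt)
        (fun s hs => (hfpos s hs).ne')).neg
    obtain ⟨hβle, hFs⟩ := hFinv_right u hu huβ
    have hs0 : 0 < Finv u := lt_of_lt_of_le hβ hβle
    have hstrict : HasStrictDerivAt F (-(1 / f (Finv u))) (Finv u) :=
      (hFC1.contDiffAt (Ioi_mem_nhds hs0)).hasStrictDerivAt' (hFderiv _ hs0) one_ne_zero
    have hne : -(1 / f (Finv u)) ≠ 0 := by
      simp [(hfpos _ hs0).ne']
    have hleft : ∀ᶠ y in nhds (Finv u), Finv (F y) = y := by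
      filter_upwards [Ioi_mem_nhds hs0] with y hy using hFinv_left y hy
    have h := (hstrict.to_local_left_inverse hne hleft).hasDerivAt
    rw [hFs] at h
    exact h.congr_deriv (by rw [one_div, inv_neg, inv_inv])
  -- pointwise one-dimensional derivative package
  have hpack : ∀ y : ℝ, (F β) ^ (-(1/2) : ℝ) ≤ y →
      (0 < y) ∧ (0 < y ^ (-(2:ℝ))) ∧ (y ^ (-(2:ℝ)) ≤ F β) ∧
      HasDerivAt (fun z : ℝ => Finv (z ^ (-(2:ℝ))))
        (2 * f (Finv (y ^ (-(2:ℝ)))) * y ^ (-(3:ℝ))) y ∧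
      HasDerivAt (fun z : ℝ => 2 * f (Finv (z ^ (-(2:ℝ)))) * z ^ (-(3:ℝ)))
        (4 * deriv f (Finv (y ^ (-(2:ℝ)))) * f (Finv (y ^ (-(2:ℝ)))) * y ^ (-(6:ℝ))
          - 6 * f (Finv (y ^ (-(2:ℝ)))) * y ^ (-(4:ℝ))) y := by
    intro y hy
    have hc : (0:ℝ) < (F β) ^ (-(1/2) : ℝ) := Real.rpow_pos_of_pos hFβpos _
    have hy0 : 0 < y := lt_of_lt_of_le hc hy
    have hu0 : 0 < y ^ (-(2:ℝ)) := Real.rpow_pos_of_pos hy0 _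
    have huβ : y ^ (-(2:ℝ)) ≤ F β := by
      have h1 : y ^ (-(2:ℝ)) ≤ ((F β) ^ (-(1/2) : ℝ)) ^ (-(2:ℝ)) :=
        Real.rpow_le_rpow_of_nonpos hc hy (by norm_num)
      have h2 : ((F β) ^ (-(1/2) : ℝ)) ^ (-(2:ℝ)) = F β := by
        rw [← Real.rpow_mul (le_of_lt hFβpos)]; norm_num
      linarith
    have hq : HasDerivAt (fun z : ℝ => z ^ (-(2:ℝ))) (-2 * y ^ (-(3:ℝ))) y := by
      have := Real.hasDerivAt_rpow_const (p := (-(2:ℝ))) (Or.inl hy0.ne')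
      convert this using 1
      norm_num
    have hφ : HasDerivAt (fun z : ℝ => Finv (z ^ (-(2:ℝ))))
        (2 * f (Finv (y ^ (-(2:ℝ)))) * y ^ (-(3:ℝ))) y := by
      have h := (hFinvd _ hu0 huβ).comp y hq
      exact h.congr_deriv (by ring)
    refine ⟨hy0, hu0, huβ, hφ, ?_⟩
    have hubar : 0 < Finv (y ^ (-(2:ℝ))) :=
      lt_of_lt_of_le hβ (hFinv_right _ hu0 huβ).1
    have hfd : HasDerivAt f (deriv f (Finv (y ^ (-(2:ℝ))))) (Finv (y ^ (-(2:ℝ)))) :=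
      ((hf.contDiffAt (Ici_mem_nhds hubar)).differentiableAt one_ne_zero).hasDerivAt
    have h1 : HasDerivAt (fun z : ℝ => f (Finv (z ^ (-(2:ℝ)))))
        (deriv f (Finv (y ^ (-(2:ℝ)))) * (2 * f (Finv (y ^ (-(2:ℝ)))) * y ^ (-(3:ℝ)))) y :=
      hfd.comp y hφ
    have h2 : HasDerivAt (fun z : ℝ => z ^ (-(3:ℝ))) (-3 * y ^ (-(4:ℝ))) y := by
      have := Real.hasDerivAt_rpow_const (p := (-(3:ℝ))) (Or.inl hy0.ne')
      convert this using 1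
      norm_num
    have h3 := (h1.const_mul 2).mul h2
    have e3 : y ^ (-(3:ℝ)) * y ^ (-(3:ℝ)) = y ^ (-(6:ℝ)) := by
      rw [← Real.rpow_add hy0]; norm_num
    exact h3.congr_deriv (by linear_combination (4 * deriv f (Finv (y ^ (-(2:ℝ)))) * f (Finv (y ^ (-(2:ℝ))))) * e3)
  -- main computation
  intro t ht x hx
  obtain ⟨hW0, hu0, huβ, hφW, hψW⟩ := hpack (w t x) (hwlb t ht x hx)
  obtain ⟨hβle, hFub⟩ := hFinv_right _ hu0 huβ
  have hubar : 0 < Finv ((w t x) ^ (-(2:ℝ))) := lt_of_lt_of_le hβ hβle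
  -- Laplacian of the composition
  have hlap : lap (fun y => Finv ((w t y) ^ (-(2:ℝ)))) x
      = (2 * f (Finv ((w t x) ^ (-(2:ℝ)))) * (w t x) ^ (-(3:ℝ))) * lap (w t) x
        + (4 * deriv f (Finv ((w t x) ^ (-(2:ℝ)))) * f (Finv ((w t x) ^ (-(2:ℝ))))
              * (w t x) ^ (-(6:ℝ))
            - 6 * f (Finv ((w t x) ^ (-(2:ℝ)))) * (w t x) ^ (-(4:ℝ)))
          * ‖gradient (w t) x‖ ^ 2 := by
    exact lap_comp (fun z => Finv (z ^ (-(2:ℝ))))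
      (fun z => 2 * f (Finv (z ^ (-(2:ℝ)))) * z ^ (-(3:ℝ))) _ (w t) R x hx (hwreg t ht)
      (fun y hy => (hpack (w t y) (hwlb t ht y hy)).2.2.2.1) hψW
  -- time derivative of the composition
  have hdt : deriv (fun τ => Finv ((w τ x) ^ (-(2:ℝ)))) t
      = (2 * f (Finv ((w t x) ^ (-(2:ℝ)))) * (w t x) ^ (-(3:ℝ)))
        * deriv (fun τ => w τ x) t := by
    have hWd : HasDerivAt (fun τ => w τ x) (deriv (fun τ => w τ x) t) t :=
      (hwt x hx t ht).hasDerivAt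
    exact (hφW.comp t hWd).deriv
  have hheat' := hheat t ht x hx
  -- algebraic identities
  have e1 : (w t x) ^ (-(3:ℝ)) * (w t x) ^ (3:ℕ) = 1 := by
    rw [← Real.rpow_natCast (w t x) 3, ← Real.rpow_add hW0]
    norm_num
  have e2 : (w t x) ^ (-(4:ℝ)) * (w t x) ^ (-(2:ℝ)) = (w t x) ^ (-(6:ℝ)) := by
    rw [← Real.rpow_add hW0]; norm_num
  constructor
  · rw [hdt, hlap, hFub]
    linear_combination (2 * f (Finv ((w t x) ^ (-(2:ℝ)))) * (w t x) ^ (-(3:ℝ)))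
        * hheat'
      + f (Finv ((w t x) ^ (-(2:ℝ)))) * e1
      + (4 * deriv f (Finv ((w t x) ^ (-(2:ℝ)))) * f (Finv ((w t x) ^ (-(2:ℝ))))
          * ‖gradient (w t) x‖ ^ 2) * e2
  · have h1 : deriv f (Finv ((w t x) ^ (-(2:ℝ)))) * F (Finv ((w t x) ^ (-(2:ℝ)))) ≤ 1 :=
      hfF _ hβle
    have h4 : (0:ℝ) ≤ 4 * f (Finv ((w t x) ^ (-(2:ℝ)))) := by
      have := hfpos _ hubar; linarith
    have hW4 : (0:ℝ) ≤ (w t x) ^ (-(4:ℝ)) := (Real.rpow_pos_of_pos hW0 _).le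
    have hG : (0:ℝ) ≤ ‖gradient (w t) x‖ ^ 2 := sq_nonneg _
    have h32 : (0:ℝ) ≤ 3/2 - deriv f (Finv ((w t x) ^ (-(2:ℝ))))
        * F (Finv ((w t x) ^ (-(2:ℝ)))) := by linarith
    exact mul_nonneg (mul_nonneg (mul_nonneg h4 hW4) hG) h32
end
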